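/- Let π be a uniformly random bijection E → {1,…,m} on the edge set of a finite hypergraph H = (V,E), run the sequential greedy matching on π, and let d_1,…,d_m be a fixed (π-independent) deletion order listing all edges of E. Then for every t ∈ {1,…,m}, the expected payment satisfies E[Φ'(d_t)] ≤ 2. -/
import Mathlib


/-!
For a uniformly random priority bijection `π : E ≃ Fin m` and a fixed
(`π`-independent) deletion order `d₁,…,d_m` listing all edges of the
hypergraph, for every time `t ∈ {1,…,m}` the expected payment satisfies
`𝔼[Φ'(d_t)] ≤ 2`.

The deletion of `d_t` is early if its owner `p(d_t)` is not among
`d₁,…,d_{t-1}`; `U(d_t) = S_{p(d_t)} \ {d₁,…,d_{t-1}}`; the payment `Φ'(d_t)`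
is `1` if `d_t` is early and `d_t ≠ p(d_t)`, `|U(d_t)|` if `d_t = p(d_t)`,
and `0` if the deletion is late.
-/
open Finset

open scoped Classical

variable {V E : Type*}

/-- Two hyperedges are incident if they share a vertex. -/
def Incident [DecidableEq V] (vert : E → Finset V) (e f : E) : Prop :=
  (vert e ∩ vert f).Nonempty

/-- `Matched vert π e` holds iff the sequential greedy matching (processing the
edges in increasing `π`-order, selecting an edge iff it is still free when
processed) selects `e`. -/
def Matched [DecidableEq V] (vert : E → Finset V) (π : E → ℕ) (e : E) : Prop :=
  ∀ f, π f < π e → Incident vert f e → ¬ Matched vert π f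
termination_by π e

/-- The matched edge owning `e` (the `π`-least matched edge incident to `e`),
i.e. the matched edge `p(e)` whose sample space `e` belongs to. -/
noncomputable def owner [DecidableEq V] (vert : E → Finset V) (π : E → ℕ) (e : E) : E :=
  if h : ∃ f, (Matched vert π f ∧ Incident vert f e) ∧
      ∀ f', Matched vert π f' → Incident vert f' e → π f ≤ π f' then
    h.choose
  else e

/-- The deletion of `d_t` (the `t`-th deleted edge, `d_t = del t`) is early if
its matched edge `p(d_t)` is not among the previously deleted `d₁,…,d_{t-1}`. -/
def EarlyAt [DecidableEq V] (vert : E → Finset V) (π : E → ℕ) {m : ℕ}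
    (del : Fin m ≃ E) (t : Fin m) : Prop :=
  ∀ s : Fin m, s < t → del s ≠ owner vert π (del t)

/-- `U(d_t) = S_{p(d_t)} \ {d₁,…,d_{t-1}}`:  the edges of the sample space of
`p(d_t)` not yet deleted just before time `t`. -/
noncomputable def Uset [DecidableEq V] [DecidableEq E] [Fintype E]
    (vert : E → Finset V) (π : E → ℕ) {m : ℕ} (del : Fin m ≃ E) (t : Fin m) : Finset E :=
  Finset.univ.filter fun e =>
    owner vert π e = owner vert π (del t) ∧ ∀ s : Fin m, s < t → del s ≠ e

/-- The payment `Φ'(d_t)`:  `1` if the deletion of `d_t` is early and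
`d_t ≠ p(d_t)`, `|U(d_t)|` if `d_t = p(d_t)` (such a deletion is early), and
`0` if the deletion is late. -/
noncomputable def payment [DecidableEq V] [DecidableEq E] [Fintype E]
    (vert : E → Finset V) (π : E → ℕ) {m : ℕ} (del : Fin m ≃ E) (t : Fin m) : ℕ :=
  if EarlyAt vert π del t then
    (if del t = owner vert π (del t) then (Uset vert π del t).card else 1)
  else 0


section Aux

variable [DecidableEq V] (vert : E → Finset V)

lemma matched_iff' (π : E → ℕ) (e : E) :
    Matched vert π e ↔ ∀ f, π f < π e → Incident vert f e → ¬ Matched vert π f := by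
  rw [Matched]

lemma incident_symm' {e f : E} (h : Incident vert e f) : Incident vert f e := by
  unfold Incident at h ⊢; rwa [Finset.inter_comm]

lemma incident_self' (hne : ∀ e : E, (vert e).Nonempty) (e : E) : Incident vert e e := by
  unfold Incident; simpa using hne e

lemma exists_matched_incident (hne : ∀ e : E, (vert e).Nonempty) (π : E → ℕ) (e : E) :
    ∃ f, Matched vert π f ∧ Incident vert f e := by
  by_cases h : Matched vert π e
  · exact ⟨e, h, incident_self' vert hne e⟩
  · rw [matched_iff'] at h
    push_neg at h
    obtain ⟨f, _, hinc, hf⟩ := h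
    exact ⟨f, hf, hinc⟩

lemma owner_spec [Fintype E] (hne : ∀ e : E, (vert e).Nonempty) (π : E → ℕ) (e : E) :
    Matched vert π (owner vert π e) ∧ Incident vert (owner vert π e) e ∧
      ∀ f', Matched vert π f' → Incident vert f' e → π (owner vert π e) ≤ π f' := by
  obtain ⟨f0, hf0⟩ := exists_matched_incident vert hne π e
  obtain ⟨g, hg, hgmin⟩ := Finset.exists_min_image
    (Finset.univ.filter fun f => Matched vert π f ∧ Incident vert f e) π
    ⟨f0, by simpa using hf0⟩
  simp only [Finset.mem_filter, Finset.mem_univ, true_and] at hg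
  have h : ∃ f, (Matched vert π f ∧ Incident vert f e) ∧
      ∀ f', Matched vert π f' → Incident vert f' e → π f ≤ π f' :=
    ⟨g, hg, fun f' h1 h2 => hgmin f' (by simp [h1, h2])⟩
  unfold owner
  rw [dif_pos h]
  exact ⟨h.choose_spec.1.1, h.choose_spec.1.2, h.choose_spec.2⟩

lemma owner_eq' [Fintype E] {π : E → ℕ} (hinj : Function.Injective π)
    (hne : ∀ e : E, (vert e).Nonempty) {e f : E}
    (hM : Matched vert π f) (hI : Incident vert f e)
    (hmin : ∀ f', Matched vert π f' → Incident vert f' e → π f ≤ π f') :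
    owner vert π e = f := by
  obtain ⟨h1, h2, h3⟩ := owner_spec vert hne π e
  exact hinj (le_antisymm (h3 f hM hI) (hmin _ h1 h2))

lemma owner_eq_self [Fintype E] {π : E → ℕ} (hinj : Function.Injective π)
    (hne : ∀ e : E, (vert e).Nonempty) {e : E} (hM : Matched vert π e) :
    owner vert π e = e := by
  refine owner_eq' vert hinj hne hM (incident_self' vert hne e) ?_
  intro f' hM' hI'
  by_contra hlt
  push_neg at hlt
  exact (matched_iff' vert π e).1 hM f' hlt hI' hM'

lemma matched_congr (π π' : E → ℕ) (N : ℕ)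
    (h1 : ∀ f, π f < N → π f = π' f) (h2 : ∀ f, π' f < N → π f = π' f) :
    ∀ e, π e < N → (Matched vert π e ↔ Matched vert π' e) := by
  have key : ∀ k e, π e = k → π e < N → (Matched vert π e ↔ Matched vert π' e) := by
    intro k
    induction k using Nat.strong_induction_on with
    | _ k ih =>
      intro e hk hlt
      have hee : π e = π' e := h1 e hlt
      rw [matched_iff' vert π e, matched_iff' vert π' e]
      constructor
      · intro H f hf hinc hM'
        have hfN : π' f < N := lt_trans (hee ▸ hf) (hee ▸ hlt)
        have hff : π f = π' f := h2 f hfN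
        have hflt : π f < π e := by omega
        exact H f hflt hinc ((ih (π f) (by omega) f rfl (by omega)).2 hM')
      · intro H f hf hinc hM
        have hfN : π f < N := lt_trans hf hlt
        have hff : π f = π' f := h1 f hfN
        have hflt : π' f < π' e := by omega
        exact H f hflt hinc ((ih (π f) (by omega) f rfl (by omega)).1 hM)
  intro e hlt
  exact key (π e) e rfl hlt

lemma owner_swap [Fintype E] [DecidableEq E] (hne : ∀ e : E, (vert e).Nonempty)
    {π : E → ℕ} (hinj : Function.Injective π)
    {a u : E} (ha : owner vert π a = a) (hu : owner vert π u = a) :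
    owner vert (π ∘ Equiv.swap a u) a = u := by
  by_cases hua : u = a
  · subst hua
    have : π ∘ ⇑(Equiv.swap u u) = π := by
      funext x; simp
    rw [this, ha]
  -- notation
  obtain ⟨haM, _, hamin⟩ := owner_spec vert hne π a
  rw [ha] at haM hamin
  obtain ⟨huM', huI', humin⟩ := owner_spec vert hne π u
  rw [hu] at huM' huI' humin
  -- u is not matched under π
  have hnotM : ¬ Matched vert π u := fun h => hua ((hu.symm.trans (owner_eq_self vert hinj hne h)).symm)
  -- π a < π u
  have hau : π a < π u := by
    rcases lt_or_ge (π a) (π u) with h | h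
    · exact h
    · exfalso
      rw [matched_iff'] at hnotM
      push_neg at hnotM
      obtain ⟨f, hf1, hf2, hf3⟩ := hnotM
      exact absurd (humin f hf3 hf2) (by omega)
  set π' : E → ℕ := π ∘ Equiv.swap a u with hπ'
  have hπ'a : π' a = π u := by simp [hπ']
  have hπ'u : π' u = π a := by simp [hπ']
  have hπ'o : ∀ f, f ≠ a → f ≠ u → π' f = π f := by
    intro f h1 h2; simp [hπ', Equiv.swap_apply_of_ne_of_ne h1 h2]
  have hcongr : ∀ e, π e < π a → (Matched vert π e ↔ Matched vert π' e) := by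
    apply matched_congr
    · intro f hf
      have hfa : f ≠ a := fun h => by subst h; omega
      have hfu : f ≠ u := fun h => by subst h; omega
      exact (hπ'o f hfa hfu).symm
    · intro f hf
      have hfa : f ≠ a := fun h => by subst h; rw [hπ'a] at hf; omega
      have hfu : f ≠ u := fun h => by subst h; rw [hπ'u] at hf; omega
      exact (hπ'o f hfa hfu).symm
  have hinj' : Function.Injective π' := hinj.comp (Equiv.swap a u).injective
  -- u is matched under π'
  have huM : Matched vert π' u := by
    rw [matched_iff']
    intro f hf hinc hM'
    rw [hπ'u] at hf
    have hfa : f ≠ a := fun h => by subst h; rw [hπ'a] at hf; omega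
    have hfu : f ≠ u := fun h => by subst h; rw [hπ'u] at hf; omega
    rw [hπ'o f hfa hfu] at hf
    have hM : Matched vert π f := (hcongr f hf).2 hM'
    exact absurd (humin f hM hinc) (by omega)
  refine owner_eq' vert hinj' hne huM (incident_symm' vert huI') ?_
  intro f' hM' hI'
  by_cases hf'u : f' = u
  · subst hf'u; exact le_refl _
  by_cases hf'a : f' = a
  · subst hf'a; rw [hπ'a, hπ'u]; omega
  rw [hπ'u, hπ'o f' hf'a hf'u]
  by_contra hlt
  push_neg at hlt
  have hM : Matched vert π f' := (hcongr f' hlt).2 hM'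
  exact absurd (hamin f' hM hI') (by omega)

end Aux

theorem stmt12 [DecidableEq V] [Fintype E] [DecidableEq E] {m : ℕ}
    (vert : E → Finset V) (hne : ∀ e : E, (vert e).Nonempty)
    (hm : Fintype.card E = m) (del : Fin m ≃ E) (t : Fin m) :
    (∑ π : E ≃ Fin m, (payment vert (fun e => (π e : ℕ)) del t : ℝ))
        / (Fintype.card (E ≃ Fin m) : ℝ) ≤ 2 := by
  classical
  have hinjn : ∀ π : E ≃ Fin m, Function.Injective (fun e => ((π e : ℕ))) := by
    intro π x y h
    exact π.injective (Fin.val_injective h)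
  set A : Finset (E ≃ Fin m) :=
    Finset.univ.filter fun π : E ≃ Fin m =>
      del t = owner vert (fun e => ((π e : ℕ))) (del t) with hA
  -- step 1 : pointwise bound
  have hpt : ∀ π : E ≃ Fin m, payment vert (fun e => ((π e : ℕ))) del t ≤
      if del t = owner vert (fun e => ((π e : ℕ))) (del t)
        then (Uset vert (fun e => ((π e : ℕ))) del t).card else 1 := by
    intro π
    unfold payment
    split_ifs <;> omega
  -- step 2 : sum over A of card Uset is a sigma card
  set T : Finset ((_ : E ≃ Fin m) × E) :=
    A.sigma (fun π => Uset vert (fun e => ((π e : ℕ))) del t) with hT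
  have hTcard : T.card = ∑ π ∈ A, (Uset vert (fun e => ((π e : ℕ))) del t).card :=
    Finset.card_sigma _ _
  -- step 3 : injection from T into permutations
  have hTle : T.card ≤ Fintype.card (E ≃ Fin m) := by
    have hkey : ∀ p ∈ T,
        owner vert (fun e => ((((Equiv.swap (del t) p.2).trans p.1) e : ℕ))) (del t) = p.2 := by
      intro p hp
      rw [hT, Finset.mem_sigma] at hp
      obtain ⟨hp1, hp2⟩ := hp
      rw [hA, Finset.mem_filter] at hp1
      have hown : del t = owner vert (fun e => ((p.1 e : ℕ))) (del t) := hp1.2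
      rw [Uset, Finset.mem_filter] at hp2
      have hu : owner vert (fun e => ((p.1 e : ℕ))) p.2 = del t := by
        rw [hp2.2.1, ← hown]
      have : (fun e => ((((Equiv.swap (del t) p.2).trans p.1) e : ℕ)))
          = (fun e => ((p.1 e : ℕ))) ∘ Equiv.swap (del t) p.2 := rfl
      rw [this]
      exact owner_swap vert hne (hinjn p.1) hown.symm hu
    have hinjOn : Set.InjOn (fun p : (_ : E ≃ Fin m) × E =>
        (Equiv.swap (del t) p.2).trans p.1) ↑T := by
      intro p hp q hq hpq
      simp only [Finset.coe_mem, Set.mem_setOf_eq] at *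
      have h2 : p.2 = q.2 := by
        have e1 := hkey p (by exact_mod_cast hp)
        have e2 := hkey q (by exact_mod_cast hq)
        rw [← e1, ← e2]
        simp only [hpq]
      have h1 : p.1 = q.1 := by
        apply Equiv.ext
        intro x
        have := congrArg (fun σ : E ≃ Fin m => σ (Equiv.swap (del t) p.2 x)) hpq
        simpa [h2, Equiv.trans_apply, Equiv.swap_apply_self] using this
      exact Sigma.ext h1 (heq_of_eq h2)
    rw [← Finset.card_image_of_injOn hinjOn]
    exact Finset.card_le_univ _
  -- natural number bound
  have main : ∑ π : E ≃ Fin m, payment vert (fun e => ((π e : ℕ))) del t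
      ≤ 2 * Fintype.card (E ≃ Fin m) := by
    calc ∑ π : E ≃ Fin m, payment vert (fun e => ((π e : ℕ))) del t
        ≤ ∑ π : E ≃ Fin m, (if del t = owner vert (fun e => ((π e : ℕ))) (del t)
            then (Uset vert (fun e => ((π e : ℕ))) del t).card else 1) :=
          Finset.sum_le_sum fun π _ => hpt π
      _ = (∑ π ∈ A, (Uset vert (fun e => ((π e : ℕ))) del t).card)
            + ∑ π ∈ Finset.univ.filter (fun π : E ≃ Fin m =>
              ¬ del t = owner vert (fun e => ((π e : ℕ))) (del t)), 1 := by
          rw [← Finset.sum_filter_add_sum_filter_not Finset.univ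
            (fun π : E ≃ Fin m => del t = owner vert (fun e => ((π e : ℕ))) (del t))]
          congr 1
          · rw [hA]
            apply Finset.sum_congr rfl
            intro π hπ
            rw [Finset.mem_filter] at hπ
            rw [if_pos hπ.2]
          · apply Finset.sum_congr rfl
            intro π hπ
            rw [Finset.mem_filter] at hπ
            rw [if_neg hπ.2]
      _ ≤ Fintype.card (E ≃ Fin m) + Fintype.card (E ≃ Fin m) := by
          gcongr
          · rw [← hTcard]; exact hTle
          · simp only [Finset.sum_const, smul_eq_mul, mul_one]
            exact (Finset.card_filter_le _ _).trans (by simp)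
      _ = 2 * Fintype.card (E ≃ Fin m) := by ring
  -- conclude over ℝ
  have hpos : (0 : ℝ) < (Fintype.card (E ≃ Fin m) : ℝ) := by
    have : Nonempty (E ≃ Fin m) := ⟨Fintype.equivFinOfCardEq hm⟩
    exact_mod_cast Fintype.card_pos
  rw [div_le_iff₀ hpos]
  calc (∑ π : E ≃ Fin m, (payment vert (fun e => ((π e : ℕ))) del t : ℝ))
      = ((∑ π : E ≃ Fin m, payment vert (fun e => ((π e : ℕ))) del t : ℕ) : ℝ) := by
        push_cast; rfl
    _ ≤ ((2 * Fintype.card (E ≃ Fin m) : ℕ) : ℝ) := by exact_mod_cast main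
    _ = 2 * (Fintype.card (E ≃ Fin m) : ℝ) := by push_cast; ring
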